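/- Let A₁ be the N×N real tridiagonal matrix with 2 on the main diagonal and −1 on the off-diagonals, let U be the matrix with entries U_{m,i} = √(2/(N+1)) sin(m i π/(N+1)), and let λ_i = 4 sin²(i π/(2(N+1))). For any Y ∈ ℝ^{N×N}, the matrix X = U (C ⊙ (Uᵀ Y U)) Uᵀ with C_{i,j} = 1/(λ_i + λ_j) satisfies (A₁ ⊕ A₁) vec(X) = vec(Y); that is, X solves the 2D discrete Poisson system A₂ u = b with A₂ = A₁ ⊕ A₁, u = vec(X), b = vec(Y). -/

import Mathlib

open Matrix
open scoped Kronecker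

noncomputable section

/-- Column-stacking vectorization of a matrix: the pair `(j, i)` encodes the flat
index `i + j*m` (0-based), i.e. `vecM A (j, i) = A i j`. -/
def vecM {R : Type*} {m n : ℕ} (A : Matrix (Fin m) (Fin n) R) : Fin n × Fin m → R :=
  fun p => A p.2 p.1

/-- Vectorization of a third-order tensor: the triple `(k, j, i)` encodes the flat
index `i + j*n1 + k*n1*n2` (0-based), i.e. `vecT T (k, j, i) = T i j k`. -/
def vecT {R : Type*} {n1 n2 n3 : ℕ} (T : Fin n1 → Fin n2 → Fin n3 → R) :
    Fin n3 × Fin n2 × Fin n1 → R :=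
  fun p => T p.2.2 p.2.1 p.1

/-- Mode-1 product of a third-order tensor with a matrix. -/
def mode1 {R : Type*} [CommRing R] {d1 d2 d3 k : ℕ}
    (T : Fin d1 → Fin d2 → Fin d3 → R) (V : Matrix (Fin k) (Fin d1) R) :
    Fin k → Fin d2 → Fin d3 → R :=
  fun i j2 j3 => ∑ j1, T j1 j2 j3 * V i j1

/-- Mode-2 product of a third-order tensor with a matrix. -/
def mode2 {R : Type*} [CommRing R] {d1 d2 d3 k : ℕ}
    (T : Fin d1 → Fin d2 → Fin d3 → R) (V : Matrix (Fin k) (Fin d2) R) :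
    Fin d1 → Fin k → Fin d3 → R :=
  fun j1 i j3 => ∑ j2, T j1 j2 j3 * V i j2

/-- Mode-3 product of a third-order tensor with a matrix. -/
def mode3 {R : Type*} [CommRing R] {d1 d2 d3 k : ℕ}
    (T : Fin d1 → Fin d2 → Fin d3 → R) (V : Matrix (Fin k) (Fin d3) R) :
    Fin d1 → Fin d2 → Fin k → R :=
  fun j1 j2 i => ∑ j3, T j1 j2 j3 * V i j3

/-- Kronecker sum of two square matrices: `A ⊕ B = A ⊗ I + I ⊗ B`. -/
def ksum2 {R : Type*} [CommRing R] {n1 n2 : ℕ}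
    (A : Matrix (Fin n2) (Fin n2) R) (B : Matrix (Fin n1) (Fin n1) R) :
    Matrix (Fin n2 × Fin n1) (Fin n2 × Fin n1) R :=
  A ⊗ₖ (1 : Matrix (Fin n1) (Fin n1) R) + (1 : Matrix (Fin n2) (Fin n2) R) ⊗ₖ B

/-- Kronecker sum of three square matrices:
`A ⊕ B ⊕ C = A ⊗ I_{n2} ⊗ I_{n1} + I_{n3} ⊗ B ⊗ I_{n1} + I_{n3} ⊗ I_{n2} ⊗ C`. -/
def ksum3 {R : Type*} [CommRing R] {n1 n2 n3 : ℕ}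
    (A : Matrix (Fin n3) (Fin n3) R) (B : Matrix (Fin n2) (Fin n2) R)
    (C : Matrix (Fin n1) (Fin n1) R) :
    Matrix (Fin n3 × Fin n2 × Fin n1) (Fin n3 × Fin n2 × Fin n1) R :=
  A ⊗ₖ (1 : Matrix (Fin n2 × Fin n1) (Fin n2 × Fin n1) R)
    + (1 : Matrix (Fin n3) (Fin n3) R) ⊗ₖ (B ⊗ₖ (1 : Matrix (Fin n1) (Fin n1) R))
    + (1 : Matrix (Fin n3) (Fin n3) R) ⊗ₖ ((1 : Matrix (Fin n2) (Fin n2) R) ⊗ₖ C)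

/-- Entrywise (Hadamard) product of third-order tensors. -/
def hadT {R : Type*} [Mul R] {n1 n2 n3 : ℕ} (S T : Fin n1 → Fin n2 → Fin n3 → R) :
    Fin n1 → Fin n2 → Fin n3 → R :=
  fun i j k => S i j k * T i j k

/-- The `N × N` second-difference matrix: `2` on the diagonal, `-1` on the
first super- and sub-diagonals. -/
def secondDiff (N : ℕ) : Matrix (Fin N) (Fin N) ℝ :=
  Matrix.of fun j k =>
    if (j : ℕ) = (k : ℕ) then (2 : ℝ)
    else if (j : ℕ) + 1 = (k : ℕ) ∨ (k : ℕ) + 1 = (j : ℕ) then -1 else 0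

/-- The eigenvalues `λ_i = 4 sin²(i π / (2(N+1)))` of `secondDiff N` (here `i`
is 1-based, so `i = i₀ + 1` for `i₀ : Fin N`). -/
def lamSD (N : ℕ) (i : Fin N) : ℝ :=
  4 * Real.sin ((((i : ℕ) : ℝ) + 1) * Real.pi / (2 * ((N : ℝ) + 1))) ^ 2

/-- The eigenvector `s_i` of `secondDiff N` with entries
`(s_i)_m = √(2/(N+1)) sin(m i π/(N+1))` (1-based `m`, `i`). -/
def dstVec (N : ℕ) (i : Fin N) : Fin N → ℝ :=
  fun m => Real.sqrt (2 / ((N : ℝ) + 1)) *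
    Real.sin ((((m : ℕ) : ℝ) + 1) * (((i : ℕ) : ℝ) + 1) * Real.pi / ((N : ℝ) + 1))

/-- The matrix `U = [s₁ s₂ ⋯ s_N]`, i.e. `U_{m,i} = √(2/(N+1)) sin(m i π/(N+1))`. -/
def dstU (N : ℕ) : Matrix (Fin N) (Fin N) ℝ :=
  Matrix.of fun m i => dstVec N i m


private lemma tele_aux (φ : ℝ) (n : ℕ) :
    ∑ m ∈ Finset.range n, 2 * Real.sin (φ/2) * Real.cos (m * φ)
      = Real.sin (n*φ - φ/2) + Real.sin (φ/2) := by
  have h := Finset.sum_range_sub (fun m : ℕ => Real.sin (m*φ - φ/2)) n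
  have h2 : ∀ m : ℕ, Real.sin ((m+1:ℕ)*φ - φ/2) - Real.sin (m*φ - φ/2)
      = 2 * Real.sin (φ/2) * Real.cos (m*φ) := by
    intro m
    rw [Real.sin_sub_sin]
    push_cast
    ring_nf
  rw [Finset.sum_congr rfl (fun m _ => h2 m)] at h
  rw [h]
  simp [Real.sin_neg]

private lemma cos_sum_eval (N k : ℕ) (hk : 0 < k) (hk2 : k < 2*(N+1)) :
    ∑ m ∈ Finset.range (N+1), Real.cos ((m:ℝ) * ((k:ℝ) * Real.pi / ((N:ℝ)+1)))
      = (1 - (-1:ℝ)^k)/2 := by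
  set φ : ℝ := (k:ℝ) * Real.pi / ((N:ℝ)+1) with hφ
  have hN : (0:ℝ) < (N:ℝ)+1 := by positivity
  have hkR : (0:ℝ) < (k:ℝ) := by exact_mod_cast hk
  have hk2R : (k:ℝ) < 2*((N:ℝ)+1) := by exact_mod_cast hk2
  have hφpos : 0 < φ/2 := by positivity
  have hφlt : φ/2 < Real.pi := by
    rw [hφ, div_div, div_lt_iff₀ (by positivity)]
    nlinarith [Real.pi_pos]
  have hs : Real.sin (φ/2) ≠ 0 :=
    ne_of_gt (Real.sin_pos_of_pos_of_lt_pi hφpos hφlt)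
  have ht := tele_aux φ (N+1)
  have hNφ : ((N+1:ℕ):ℝ) * φ = (k:ℝ) * Real.pi := by
    push_cast; rw [hφ]; field_simp
  rw [hNφ] at ht
  have hend : Real.sin ((k:ℝ) * Real.pi - φ/2) = -((-1:ℝ)^k * Real.sin (φ/2)) := by
    have := Real.sin_int_mul_pi_sub (φ/2) (k:ℤ)
    push_cast at this
    exact this
  rw [hend] at ht
  have hfac : ∑ m ∈ Finset.range (N+1), 2 * Real.sin (φ/2) * Real.cos ((m:ℝ)*φ)
      = 2 * Real.sin (φ/2) * ∑ m ∈ Finset.range (N+1), Real.cos ((m:ℝ)*φ) := by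
    rw [Finset.mul_sum]
  rw [hfac] at ht
  have h2s : (2 : ℝ) * Real.sin (φ/2) ≠ 0 := by simp [hs]
  apply mul_left_cancel₀ h2s
  rw [ht]; ring

/-- shifted sum: ∑_{m=1}^{N} cos(m k π/(N+1)) for 0 < k < 2(N+1). -/
private lemma cos_shift_sum (N k : ℕ) (hk : 0 < k) (hk2 : k < 2*(N+1)) :
    ∑ m : Fin N, Real.cos ((((m:ℕ):ℝ)+1) * ((k:ℝ) * Real.pi / ((N:ℝ)+1)))
      = (1 - (-1:ℝ)^k)/2 - 1 := by
  have h := cos_sum_eval N k hk hk2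
  rw [Finset.sum_range_succ'] at h
  simp only [Nat.cast_zero, zero_mul, Real.cos_zero] at h
  have : ∑ m : Fin N, Real.cos ((((m:ℕ):ℝ)+1) * ((k:ℝ) * Real.pi / ((N:ℝ)+1)))
      = ∑ m ∈ Finset.range N, Real.cos (((m:ℝ)+1) * ((k:ℝ) * Real.pi / ((N:ℝ)+1))) := by
    rw [← Fin.sum_univ_eq_sum_range (fun m : ℕ => Real.cos (((m:ℝ)+1) * ((k:ℝ) * Real.pi / ((N:ℝ)+1))))]
  rw [this]
  have e : ∀ m ∈ Finset.range N, Real.cos (((m:ℝ)+1) * ((k:ℝ) * Real.pi / ((N:ℝ)+1)))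
      = Real.cos (((m+1:ℕ):ℝ) * ((k:ℝ) * Real.pi / ((N:ℝ)+1))) := by
    intro m _; push_cast; ring_nf
  rw [Finset.sum_congr rfl e]
  linarith [h]

private lemma sinsum_orth (N : ℕ) (i j : Fin N) (hij : (j:ℕ) ≤ (i:ℕ)) :
    ∑ m : Fin N,
      Real.sin ((((m:ℕ):ℝ)+1) * ((((i:ℕ):ℝ)+1) * Real.pi / ((N:ℝ)+1))) *
      Real.sin ((((m:ℕ):ℝ)+1) * ((((j:ℕ):ℝ)+1) * Real.pi / ((N:ℝ)+1)))
      = if i = j then ((N:ℝ)+1)/2 else 0 := by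
  have hN : (0:ℝ) < (N:ℝ)+1 := by positivity
  set d : ℕ := (i:ℕ) - (j:ℕ) with hd
  have hdc : ((i:ℕ):ℝ) - ((j:ℕ):ℝ) = (d:ℝ) := by
    rw [hd]; push_cast [hij]; ring
  set s : ℕ := (i:ℕ) + (j:ℕ) + 2 with hs
  have hprod : ∀ m : Fin N,
      Real.sin ((((m:ℕ):ℝ)+1) * ((((i:ℕ):ℝ)+1) * Real.pi / ((N:ℝ)+1))) *
      Real.sin ((((m:ℕ):ℝ)+1) * ((((j:ℕ):ℝ)+1) * Real.pi / ((N:ℝ)+1)))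
      = (Real.cos ((((m:ℕ):ℝ)+1) * ((d:ℝ) * Real.pi / ((N:ℝ)+1)))
         - Real.cos ((((m:ℕ):ℝ)+1) * ((s:ℝ) * Real.pi / ((N:ℝ)+1)))) / 2 := by
    intro m
    have h1 : (((m:ℕ):ℝ)+1) * ((d:ℝ) * Real.pi / ((N:ℝ)+1))
        = (((m:ℕ):ℝ)+1) * ((((i:ℕ):ℝ)+1) * Real.pi / ((N:ℝ)+1))
          - (((m:ℕ):ℝ)+1) * ((((j:ℕ):ℝ)+1) * Real.pi / ((N:ℝ)+1)) := by
      rw [← hdc]; ring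
    have h2 : (((m:ℕ):ℝ)+1) * ((s:ℝ) * Real.pi / ((N:ℝ)+1))
        = (((m:ℕ):ℝ)+1) * ((((i:ℕ):ℝ)+1) * Real.pi / ((N:ℝ)+1))
          + (((m:ℕ):ℝ)+1) * ((((j:ℕ):ℝ)+1) * Real.pi / ((N:ℝ)+1)) := by
      rw [hs]; push_cast; ring
    set a : ℝ := (((m:ℕ):ℝ)+1) * ((((i:ℕ):ℝ)+1) * Real.pi / ((N:ℝ)+1))
    set b : ℝ := (((m:ℕ):ℝ)+1) * ((((j:ℕ):ℝ)+1) * Real.pi / ((N:ℝ)+1))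
    rw [h1, h2]
    have := Real.cos_sub_cos (a-b) (a+b)
    have e1 : (a - b + (a+b))/2 = a := by ring
    have e2 : (a - b - (a+b))/2 = -b := by ring
    rw [e1, e2, Real.sin_neg] at this
    linarith [this]
  rw [Finset.sum_congr rfl (fun m _ => hprod m)]
  have hspos : 0 < s := by omega
  have hslt : s < 2*(N+1) := by
    have hi := i.isLt; have hj := j.isLt; omega
  have hsum2 := cos_shift_sum N s hspos hslt
  by_cases hij' : i = j
  · subst hij'
    have hd0 : d = 0 := by omega
    have hcos1 : ∀ m : Fin N,
        Real.cos ((((m:ℕ):ℝ)+1) * ((d:ℝ) * Real.pi / ((N:ℝ)+1))) = 1 := by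
      intro m; rw [hd0]; simp
    have hpar : (-1:ℝ)^s = 1 := by
      have : s = 2*((i:ℕ)+1) := by omega
      rw [this, pow_mul]; norm_num
    rw [hpar] at hsum2
    rw [if_pos rfl, ← Finset.sum_div, Finset.sum_sub_distrib,
      Finset.sum_congr rfl (fun m _ => hcos1 m), hsum2]
    simp
  · have hdpos : 0 < d := by
      have : (i:ℕ) ≠ (j:ℕ) := fun h => hij' (Fin.ext h)
      omega
    have hdlt : d < 2*(N+1) := by have := i.isLt; omega
    have hsum1 := cos_shift_sum N d hdpos hdlt
    have hpar : (-1:ℝ)^s = (-1:ℝ)^d := by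
      have : s = d + 2*((j:ℕ)+1) := by omega
      rw [this, pow_add, pow_mul]; norm_num
    rw [if_neg hij']
    rw [← Finset.sum_div, Finset.sum_sub_distrib, hsum1, hsum2, hpar]
    ring


private lemma dstU_orth (N : ℕ) : (dstU N)ᵀ * dstU N = 1 := by
  ext i j
  rw [Matrix.mul_apply, Matrix.one_apply]
  simp only [Matrix.transpose_apply]
  have hN : (0:ℝ) < (N:ℝ)+1 := by positivity
  have hsq : Real.sqrt (2 / ((N:ℝ)+1)) ^ 2 = 2 / ((N:ℝ)+1) := by
    rw [Real.sq_sqrt]; positivity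
  have key : ∀ (i j : Fin N), (j:ℕ) ≤ (i:ℕ) →
      ∑ m : Fin N, dstU N m i * dstU N m j = if i = j then 1 else 0 := by
    intro i j hij
    have h := sinsum_orth N i j hij
    have e : ∀ m : Fin N, dstU N m i * dstU N m j
        = (2 / ((N:ℝ)+1)) *
          (Real.sin ((((m:ℕ):ℝ)+1) * ((((i:ℕ):ℝ)+1) * Real.pi / ((N:ℝ)+1))) *
           Real.sin ((((m:ℕ):ℝ)+1) * ((((j:ℕ):ℝ)+1) * Real.pi / ((N:ℝ)+1)))) := by
      intro m
      simp only [dstU, dstVec, Matrix.of_apply]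
      have hmul : ∀ x y : ℝ, (Real.sqrt (2/((N:ℝ)+1)) * x) * (Real.sqrt (2/((N:ℝ)+1)) * y)
          = (2/((N:ℝ)+1)) * (x*y) := by
        intro x y
        rw [mul_mul_mul_comm, ← sq, hsq]
      have a1 : (((m:ℕ):ℝ)+1) * ((((i:ℕ):ℝ)+1)) * Real.pi / ((N:ℝ)+1)
          = (((m:ℕ):ℝ)+1) * ((((i:ℕ):ℝ)+1) * Real.pi / ((N:ℝ)+1)) := by ring
      have a2 : (((m:ℕ):ℝ)+1) * ((((j:ℕ):ℝ)+1)) * Real.pi / ((N:ℝ)+1)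
          = (((m:ℕ):ℝ)+1) * ((((j:ℕ):ℝ)+1) * Real.pi / ((N:ℝ)+1)) := by ring
      rw [a1, a2, hmul]
    rw [Finset.sum_congr rfl (fun m _ => e m), ← Finset.mul_sum, h]
    by_cases hij' : i = j
    · rw [if_pos hij', if_pos hij']
      field_simp
    · rw [if_neg hij', if_neg hij', mul_zero]
  rcases le_total (j:ℕ) (i:ℕ) with h | h
  · exact key i j h
  · have := key j i h
    have comm : ∑ m : Fin N, dstU N m i * dstU N m j
        = ∑ m : Fin N, dstU N m j * dstU N m i := by
      exact Finset.sum_congr rfl (fun m _ => mul_comm _ _)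
    rw [comm, this]
    by_cases hij' : i = j
    · rw [if_pos hij', if_pos hij'.symm]
    · rw [if_neg hij', if_neg (fun hh => hij' hh.symm)]

private lemma dstU_orth' (N : ℕ) : dstU N * (dstU N)ᵀ = 1 :=
  mul_eq_one_comm.mp (dstU_orth N)

private lemma g_boundary (N : ℕ) (i : Fin N) :
    Real.sin (((N:ℝ)+1) * ((((i:ℕ):ℝ)+1) * Real.pi / ((N:ℝ)+1))) = 0 := by
  have hN : ((N:ℝ)+1) ≠ 0 := by positivity
  have e : ((N:ℝ)+1) * ((((i:ℕ):ℝ)+1) * Real.pi / ((N:ℝ)+1))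
      = (((i:ℕ)+1:ℕ):ℝ) * Real.pi := by
    push_cast; field_simp
  rw [e, Real.sin_nat_mul_pi]

private lemma eigen_rel (N : ℕ) :
    secondDiff N * dstU N = dstU N * Matrix.diagonal (lamSD N) := by
  ext m i
  rw [Matrix.mul_apply, Matrix.mul_diagonal]
  set θ : ℝ := (((i:ℕ):ℝ)+1) * Real.pi / ((N:ℝ)+1) with hθ
  set g : ℕ → ℝ := fun k => Real.sin ((k:ℝ) * θ) with hg
  have hUg : ∀ k : Fin N, dstU N k i = Real.sqrt (2 / ((N:ℝ)+1)) * g ((k:ℕ)+1) := by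
    intro k
    simp only [dstU, dstVec, Matrix.of_apply, hg]
    congr 1
    push_cast
    rw [hθ]; ring
  -- the sum evaluates to c * (2 g(m+1) - g m - g(m+2))
  have hsum : ∑ k : Fin N, secondDiff N m k * dstU N k i
      = Real.sqrt (2 / ((N:ℝ)+1)) * (2 * g ((m:ℕ)+1) - g (m:ℕ) - g ((m:ℕ)+2)) := by
    have hsplit : ∀ k : Fin N, secondDiff N m k * dstU N k i
        = Real.sqrt (2 / ((N:ℝ)+1)) *
          ((if (k:ℕ) = (m:ℕ) then 2 * g ((k:ℕ)+1) else 0)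
           + (if (k:ℕ) = (m:ℕ)+1 then -g ((k:ℕ)+1) else 0)
           + (if (k:ℕ)+1 = (m:ℕ) then -g ((k:ℕ)+1) else 0)) := by
      intro k
      rw [hUg k]
      simp only [secondDiff, Matrix.of_apply]
      split_ifs <;> first | ring1 | (exfalso; omega)
    rw [Finset.sum_congr rfl (fun k _ => hsplit k), ← Finset.mul_sum]
    congr 1
    rw [Finset.sum_add_distrib, Finset.sum_add_distrib]
    have s1 : ∑ k : Fin N, (if (k:ℕ) = (m:ℕ) then 2 * g ((k:ℕ)+1) else 0)
        = 2 * g ((m:ℕ)+1) := by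
      rw [Fin.sum_univ_eq_sum_range (fun k => if k = (m:ℕ) then 2 * g (k+1) else 0)]
      rw [Finset.sum_ite_eq' (Finset.range N) (m:ℕ) (fun k => 2 * g (k+1))]
      rw [if_pos (Finset.mem_range.mpr m.isLt)]
    have s2 : ∑ k : Fin N, (if (k:ℕ) = (m:ℕ)+1 then -g ((k:ℕ)+1) else 0)
        = -g ((m:ℕ)+2) := by
      rw [Fin.sum_univ_eq_sum_range (fun k => if k = (m:ℕ)+1 then -g (k+1) else 0)]
      rw [Finset.sum_ite_eq' (Finset.range N) ((m:ℕ)+1) (fun k => -g (k+1))]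
      by_cases hb : (m:ℕ)+1 < N
      · rw [if_pos (Finset.mem_range.mpr hb)]
      · rw [if_neg (fun hh => hb (Finset.mem_range.mp hh))]
        have hmN : (m:ℕ)+1 = N := by have := m.isLt; omega
        have : g ((m:ℕ)+2) = 0 := by
          have e2 : (((m:ℕ)+2:ℕ):ℝ) = (N:ℝ)+1 := by
            have h22 : (m:ℕ)+2 = N+1 := by omega
            rw [h22]; push_cast; ring
          rw [hg]; simp only []
          rw [e2]
          exact g_boundary N i
        rw [this]; ring
    have s3 : ∑ k : Fin N, (if (k:ℕ)+1 = (m:ℕ) then -g ((k:ℕ)+1) else 0)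
        = -g (m:ℕ) := by
      rw [Fin.sum_univ_eq_sum_range (fun k => if k+1 = (m:ℕ) then -g (k+1) else 0)]
      rcases Nat.eq_zero_or_pos (m:ℕ) with h0 | hpos
      · rw [h0]
        have : ∀ k ∈ Finset.range N, (if k+1 = 0 then -g (k+1) else 0) = 0 := by
          intro k _; rw [if_neg (by omega)]
        rw [Finset.sum_congr rfl this, Finset.sum_const_zero]
        rw [hg]; simp
      · obtain ⟨mm, hmm⟩ : ∃ mm, (m:ℕ) = mm + 1 := ⟨(m:ℕ)-1, by omega⟩
        have e3 : ∀ k ∈ Finset.range N, (if k+1 = (m:ℕ) then -g (k+1) else 0)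
            = (if k = mm then -g (k+1) else 0) := by
          intro k _; rw [hmm]
          by_cases hk : k = mm
          · rw [if_pos (by omega), if_pos hk]
          · rw [if_neg (by omega), if_neg hk]
        rw [Finset.sum_congr rfl e3]
        rw [Finset.sum_ite_eq' (Finset.range N) mm (fun k => -g (k+1))]
        rw [if_pos (Finset.mem_range.mpr (by have := m.isLt; omega)), ← hmm]
    rw [s1, s2, s3]; ring
  rw [hsum, hUg m]
  -- trig identity: 2 sin x - sin(x-θ) - sin(x+θ) = 4 sin²(θ/2) sin x
  have hx1 : ((m:ℕ):ℝ) * θ = (((m:ℕ):ℝ)+1) * θ - θ := by ring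
  have hx2 : (((m:ℕ)+2:ℕ):ℝ) * θ = (((m:ℕ):ℝ)+1) * θ + θ := by push_cast; ring
  have hgm : g (m:ℕ) = Real.sin ((((m:ℕ):ℝ)+1) * θ - θ) := by rw [hg]; simp only []; rw [hx1]
  have hgm1 : g ((m:ℕ)+1) = Real.sin ((((m:ℕ):ℝ)+1) * θ) := by
    rw [hg]; simp only []; push_cast; ring_nf
  have hgm2 : g ((m:ℕ)+2) = Real.sin ((((m:ℕ):ℝ)+1) * θ + θ) := by
    rw [hg]; simp only []; rw [hx2]
  rw [hgm, hgm1, hgm2]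
  have hlam : lamSD N i = 2 * (1 - Real.cos θ) := by
    rw [lamSD]
    have hhalf : (((i:ℕ):ℝ)+1) * Real.pi / (2 * ((N:ℝ)+1)) = θ/2 := by
      have hN0 : ((N:ℝ)+1) ≠ 0 := by positivity
      rw [hθ]; field_simp
    rw [hhalf]
    have h := Real.cos_two_mul (θ/2)
    have e : 2*(θ/2) = θ := by ring
    rw [e] at h
    nlinarith [Real.sin_sq_add_cos_sq (θ/2)]
  rw [hlam, Real.sin_sub, Real.sin_add]
  ring

private lemma lamSD_pos (N : ℕ) (i : Fin N) : 0 < lamSD N i := by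
  rw [lamSD]
  have hN : (0:ℝ) < (N:ℝ)+1 := by positivity
  have h1 : 0 < (((i:ℕ):ℝ)+1) * Real.pi / (2 * ((N:ℝ)+1)) := by positivity
  have h2 : (((i:ℕ):ℝ)+1) * Real.pi / (2 * ((N:ℝ)+1)) < Real.pi := by
    rw [div_lt_iff₀ (by positivity)]
    have : ((i:ℕ):ℝ) + 1 < 2 * ((N:ℝ)+1) := by
      have := i.isLt
      have : ((i:ℕ):ℝ) < (N:ℝ) := by exact_mod_cast this
      linarith
    nlinarith [Real.pi_pos]
  have := Real.sin_pos_of_pos_of_lt_pi h1 h2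
  positivity

private lemma secondDiff_symm (N : ℕ) : (secondDiff N)ᵀ = secondDiff N := by
  ext a b
  simp only [Matrix.transpose_apply, secondDiff, Matrix.of_apply]
  split_ifs <;> first | rfl | (exfalso; omega)

/-- explicit solution of the 2D discrete Poisson system
`(A₁ ⊕ A₁) vec X = vec Y` via `X = U (C ⊙ (Uᵀ Y U)) Uᵀ` with
`C_{i,j} = 1/(λ_i + λ_j)`. -/
theorem poisson2D_solution (N : ℕ) (Y C X : Matrix (Fin N) (Fin N) ℝ)
    (hC : ∀ i j, C i j = 1 / (lamSD N i + lamSD N j))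
    (hX : X = dstU N * Matrix.hadamard C ((dstU N)ᵀ * Y * dstU N) * (dstU N)ᵀ) :
    (ksum2 (secondDiff N) (secondDiff N)).mulVec (vecM X) = vecM Y := by
  set A := secondDiff N with hA
  set U := dstU N with hU
  set Λ := Matrix.diagonal (lamSD N) with hΛ
  set M := (dstU N)ᵀ * Y * dstU N with hM
  set H := Matrix.hadamard C M with hH
  have hAU : A * U = U * Λ := eigen_rel N
  have hUtU : Uᵀ * U = 1 := dstU_orth N
  have hUUt : U * Uᵀ = 1 := dstU_orth' N
  have hAsym : Aᵀ = A := secondDiff_symm N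
  have hUtA : Uᵀ * A = Λ * Uᵀ := by
    have h := congrArg Matrix.transpose hAU
    rw [Matrix.transpose_mul, Matrix.transpose_mul, hAsym, Matrix.diagonal_transpose] at h
    exact h
  have hdiag : Λ * H + H * Λ = M := by
    ext a b
    simp only [hH, hΛ, Matrix.add_apply, Matrix.diagonal_mul, Matrix.mul_diagonal,
      Matrix.hadamard_apply]
    rw [hC a b]
    have h1 := lamSD_pos N a
    have h2 := lamSD_pos N b
    have h3 : lamSD N a + lamSD N b ≠ 0 := by positivity
    field_simp
  have hfin : A * X + X * A = Y := by
    rw [hX]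
    have e1 : A * (U * H * Uᵀ) = U * (Λ * H) * Uᵀ := by
      rw [← Matrix.mul_assoc, ← Matrix.mul_assoc, hAU, Matrix.mul_assoc U Λ H]
    have e2 : U * H * Uᵀ * A = U * (H * Λ) * Uᵀ := by
      rw [Matrix.mul_assoc (U * H) Uᵀ A, hUtA, ← Matrix.mul_assoc (U * H) Λ Uᵀ,
        Matrix.mul_assoc U H Λ]
    show A * (U * H * Uᵀ) + U * H * Uᵀ * A = Y
    rw [e1, e2, ← Matrix.add_mul, ← Matrix.mul_add, hdiag, hM]
    have e3 : U * (Uᵀ * Y * U) * Uᵀ = (U * Uᵀ) * Y * (U * Uᵀ) := by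
      simp only [Matrix.mul_assoc]
    show U * (Uᵀ * Y * U) * Uᵀ = Y
    rw [e3, hUUt, Matrix.one_mul, Matrix.mul_one]
  have hsA : ∀ a b, A a b = A b a := by
    intro a b
    exact (congrFun (congrFun hAsym.symm b) a).symm
  funext p
  obtain ⟨jc, ir⟩ := p
  have hYij : ∑ k, A ir k * X k jc + ∑ l, X ir l * A l jc = Y ir jc := by
    have := congrArg (fun Z => Z ir jc) hfin
    simpa only [Matrix.add_apply, Matrix.mul_apply] using this
  show ∑ q : Fin N × Fin N, ksum2 A A (jc, ir) q * vecM X q = vecM Y (jc, ir)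
  simp only [ksum2, Matrix.add_apply, Matrix.kroneckerMap_apply, vecM,
    Fintype.sum_prod_type, Matrix.one_apply, add_mul, ite_mul, one_mul, zero_mul,
    mul_ite, mul_zero, mul_one, Finset.sum_add_distrib, Finset.sum_ite_eq,
    Finset.mem_univ, if_true]
  rw [← hYij]
  have t1 : ∑ l : Fin N, A jc l * X ir l = ∑ l : Fin N, X ir l * A l jc := by
    apply Finset.sum_congr rfl
    intro l _
    rw [hsA jc l]; ring
  rw [t1]
  conv_rhs => rw [add_comm]
  congr 1
  rw [Finset.sum_comm]
  apply Finset.sum_congr rfl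
  intro k _
  rw [Finset.sum_ite_eq]
  simp
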